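/- arXiv:2006.00641 — 6 statements merged into one kernel-verified Lean document; each statement's English description precedes it below -/
import Mathlib

section
/- Let Q be an involutory quandle (a set with operation ◁ satisfying x◁x = x, x◁(x◁y) = y, and (x◁y)◁z = x◁(y◁(x◁z))), and let (xᵢ)_{i∈ℤ} be a trajectory in Q, i.e., x_{i+1} = xᵢ ◁ x_{i-1} for all i. If xᵢ = x_{i+m} for some i ∈ ℤ and some m > 0, then x_j = x_{j+2m} for all j ∈ ℤ. -/
theorem trajectory_periodic_quandle {Q : Type*} (op : Q → Q → Q)
    (hidem : ∀ x, op x x = x)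
    (hinv : ∀ x y, op x (op x y) = y)
    (hdist : ∀ x y z, op (op x y) z = op x (op y (op x z)))
    (x : ℤ → Q)
    (htraj : ∀ i : ℤ, x (i + 1) = op (x i) (x (i - 1)))
    (i : ℤ) (m : ℤ) (hm : 0 < m) (hper : x i = x (i + m)) :
    ∀ j : ℤ, x j = x (j + 2 * m) := by
  have aut : ∀ a b c, op (op a b) (op a c) = op a (op b c) := by
    intro a b c
    rw [hdist, hinv]
  -- key claim for nonnegative offsets, two-step induction
  have pos : ∀ (a : ℤ) (n : ℕ), op (x a) (x (a + n)) = x (a - n) ∧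
      op (x a) (x (a + n + 1)) = x (a - n - 1) := by
    intro a n
    induction n with
    | zero =>
      constructor
      · simpa using hidem (x a)
      · have h := htraj a
        simp only [Nat.cast_zero, add_zero]
        rw [h, hinv]
        norm_num
    | succ n ih =>
      obtain ⟨h1, h2⟩ := ih
      constructor
      · have : (a + (n + 1 : ℕ) : ℤ) = a + n + 1 := by push_cast; ring
        rw [this]
        convert h2 using 2
        push_cast; ring
      · have e1 : (a + (n + 1 : ℕ) + 1 : ℤ) = (a + n + 1) + 1 := by push_cast; ring
        have e2 : ((a + n + 1) - 1 : ℤ) = a + n := by ring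
        rw [e1, htraj (a + (n:ℤ) + 1), e2, ← aut, h2, h1]
        have e3 : x (a - n) = op (x (a - n - 1)) (x (a - n - 1 - 1)) := by
          have := htraj (a - n - 1)
          rw [sub_add_cancel] at this
          exact this
        rw [e3, hinv]
        congr 1
        push_cast; ring
  have key : ∀ a b : ℤ, op (x a) (x b) = x (2 * a - b) := by
    intro a b
    rcases le_or_gt a b with h | h
    · obtain ⟨n, hn⟩ := Int.le.dest h
      have := (pos a n).1
      rw [hn] at this
      rw [this]
      congr 1
      omega
    · -- b < a : use involution
      obtain ⟨n, hn⟩ := Int.le.dest h.le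
      have h1 := (pos a n).1
      have hb : b = a - n := by omega
      rw [hb, ← h1, hinv]
      congr 1
      omega
  intro j
  have h1 : x j = op (x i) (x (2 * i - j)) := by
    rw [key]; congr 1; ring
  rw [h1, hper, key]
  congr 1
  ring
end

section
/- Let G be a group with core operation x ◁ y = x y⁻¹ x, and let x̄ denote the map y ↦ x ◁ y on G. For x, x′ ∈ G, one has x̄ = x̄′ if and only if x′⁻¹ x is central in G and (x′⁻¹ x)² = 1. -/
theorem symmetry_eq_iff (G : Type*) [Group G] (x x' : G) :
    (fun y : G => x * y⁻¹ * x) = (fun y : G => x' * y⁻¹ * x') ↔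
    (x'⁻¹ * x ∈ Subgroup.center G ∧ (x'⁻¹ * x) ^ 2 = 1) := by
  rw [Subgroup.mem_center_iff]
  constructor
  · intro h
    have h' : ∀ y : G, x * y * x = x' * y * x' := fun y => by
      have := congrFun h y⁻¹; simpa using this
    have hsq : x * x = x' * x' := by simpa using h' 1
    have hc : x'⁻¹ * x = x' * x⁻¹ := by
      rw [inv_mul_eq_iff_eq_mul, ← mul_assoc, ← hsq, mul_assoc, mul_inv_cancel, mul_one]
    have hcent : ∀ g : G, g * (x'⁻¹ * x) = (x'⁻¹ * x) * g := by
      intro g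
      have := h' g
      calc g * (x'⁻¹ * x) = g * (x' * x⁻¹) := by rw [hc]
        _ = x'⁻¹ * (x' * g * x') * x⁻¹ := by group
        _ = x'⁻¹ * (x * g * x) * x⁻¹ := by rw [this]
        _ = (x'⁻¹ * x) * g := by group
    refine ⟨hcent, ?_⟩
    have hcomm : x * x' = x' * x := by
      have := hcent x'
      calc x * x' = x' * (x'⁻¹ * x * x') := by group
        _ = x' * (x' * (x'⁻¹ * x)) := by rw [← hcent x']
        _ = x' * x := by group
    calc (x'⁻¹ * x) ^ 2 = x'⁻¹ * x * (x'⁻¹ * x) := sq _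
      _ = x'⁻¹ * x * (x' * x⁻¹) := by rw [hc]
      _ = x'⁻¹ * (x * x') * x⁻¹ := by group
      _ = x'⁻¹ * (x' * x) * x⁻¹ := by rw [hcomm]
      _ = 1 := by group
  · rintro ⟨hc, hsq⟩
    funext y
    have hx : x = x' * (x'⁻¹ * x) := by group
    calc x * y⁻¹ * x = x' * (x'⁻¹ * x) * y⁻¹ * (x' * (x'⁻¹ * x)) := by rw [← hx]
      _ = x' * ((x'⁻¹ * x) * y⁻¹) * x' * (x'⁻¹ * x) := by group
      _ = x' * (y⁻¹ * (x'⁻¹ * x)) * x' * (x'⁻¹ * x) := by rw [hc y⁻¹]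
      _ = x' * y⁻¹ * ((x'⁻¹ * x) * x') * (x'⁻¹ * x) := by group
      _ = x' * y⁻¹ * (x' * (x'⁻¹ * x)) * (x'⁻¹ * x) := by rw [← hc x']
      _ = x' * y⁻¹ * x' * ((x'⁻¹ * x) * (x'⁻¹ * x)) := by group
      _ = x' * y⁻¹ * x' * (x'⁻¹ * x) ^ 2 := by rw [sq]
      _ = x' * y⁻¹ * x' := by rw [hsq, mul_one]
end

section
/- For any group G, the map x ↦ (u, x, x⁻¹) is an injective homomorphism of involutory quandles from Core(G) into the set of involutions of the semidirect product Z₂ ⋉ (G × G), where the nontrivial element u of Z₂ acts on G × G by swapping coordinates. In particular, each (u, x, x⁻¹) has square the identity, and (u, x◁y, (x◁y)⁻¹) = (u,x,x⁻¹)(u,y,y⁻¹)⁻¹(u,x,x⁻¹), where x ◁ y = x y⁻¹ x. -/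
/-- The swap automorphism of `G × G`. -/
def swapAut (G : Type*) [Group G] : MulAut (G × G) :=
  MulEquiv.prodComm (M := G) (N := G)

theorem swapAut_mul_self (G : Type*) [Group G] : swapAut G * swapAut G = 1 := by
  ext p <;> simp [swapAut]

/-- The action of `Z₂` on `G × G` in which the nontrivial element
interchanges the two factors. -/
def swapAction (G : Type*) [Group G] :
    Multiplicative (ZMod 2) →* MulAut (G × G) where
  toFun u := if (Multiplicative.toAdd u : ZMod 2) = 0 then 1 else swapAut G
  map_one' := by simp
  map_mul' a b := by
    have h : ∀ c : ZMod 2, c = 0 ∨ c = 1 := by decide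
    have h11 : (1 + 1 : ZMod 2) = 0 := by decide
    have h10 : (1 : ZMod 2) ≠ 0 := by decide
    rcases h (Multiplicative.toAdd a) with ha | ha <;>
      rcases h (Multiplicative.toAdd b) with hb | hb <;>
      simp [toAdd_mul, ha, hb, h11, h10, swapAut_mul_self]

/-- The nontrivial element of `Z₂`, viewed in the semidirect product
`(G × G) ⋊ Z₂`. -/
def uElt : Multiplicative (ZMod 2) := Multiplicative.ofAdd 1

/-- The map `x ↦ (u, x, x⁻¹)` from `G` into `Z₂ ⋉ (G × G)`. -/
def coreEmb (G : Type*) [Group G] :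
    G → (G × G) ⋊[swapAction G] Multiplicative (ZMod 2) :=
  fun x => ⟨(x, x⁻¹), uElt⟩

theorem core_embeds_in_involutions (G : Type*) [Group G] :
    Function.Injective (coreEmb G) ∧
    (∀ x : G, coreEmb G x * coreEmb G x = 1) ∧
    (∀ x y : G,
      coreEmb G (x * y⁻¹ * x) =
        coreEmb G x * (coreEmb G y)⁻¹ * coreEmb G x) := by
  have hu : swapAction G uElt = swapAut G := by
    simp [swapAction, uElt]
  have huu : uElt * uElt = (1 : Multiplicative (ZMod 2)) := by decide
  have huinv : uElt⁻¹ = uElt := by decide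
  refine ⟨?_, ?_, ?_⟩
  · intro x y h
    exact congrArg (fun p => p.left.1) h
  · intro x
    ext <;>
      simp [coreEmb, hu, huu, SemidirectProduct.mul_left, SemidirectProduct.mul_right, swapAut]
  · intro x y
    ext <;>
      simp [coreEmb, hu, huu, huinv, SemidirectProduct.mul_left, SemidirectProduct.mul_right,
        SemidirectProduct.inv_left, SemidirectProduct.inv_right, swapAut, mul_assoc]
end

section
/- Let G be a group with core operation x ◁ y = x y⁻¹ x. Then the identity w ◁ (x ◁ (y ◁ z)) = y ◁ (x ◁ (w ◁ z)) holds for all w, x, y, z ∈ G if and only if G is nilpotent of class at most 2, i.e., every commutator [x,y] = x⁻¹y⁻¹xy is central in G. -/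
theorem core_abelian_identity_iff_class_two (G : Type*) [Group G] :
    (∀ w x y z : G,
      w * (x * (y * z⁻¹ * y)⁻¹ * x)⁻¹ * w =
      y * (x * (w * z⁻¹ * w)⁻¹ * x)⁻¹ * y) ↔
    (∀ x y : G, x⁻¹ * y⁻¹ * x * y ∈ Subgroup.center G) := by
  constructor
  · intro h x y
    rw [Subgroup.mem_center_iff]
    intro g
    have H := h y⁻¹ 1 x⁻¹ (x * y * g)⁻¹
    calc g * (x⁻¹ * y⁻¹ * x * y)
        = (y⁻¹ * (1 * (x⁻¹ * ((x * y * g)⁻¹)⁻¹ * x⁻¹)⁻¹ * 1)⁻¹ * y⁻¹) * x * y := by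
          group
      _ = (x⁻¹ * (1 * (y⁻¹ * ((x * y * g)⁻¹)⁻¹ * y⁻¹)⁻¹ * 1)⁻¹ * x⁻¹) * x * y := by
          rw [H]
      _ = x⁻¹ * y⁻¹ * x * y * g := by group
  · intro h w x y z
    have hc := Subgroup.mem_center_iff.mp (h (x⁻¹ * y) (x⁻¹ * w))
    calc w * (x * (y * z⁻¹ * y)⁻¹ * x)⁻¹ * w
        = (w * x⁻¹ * y) * z⁻¹ *
            ((w * x⁻¹ * y) * ((x⁻¹ * y)⁻¹ * (x⁻¹ * w)⁻¹ * (x⁻¹ * y) * (x⁻¹ * w))) := by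
          group
      _ = (w * x⁻¹ * y) * z⁻¹ *
            (((x⁻¹ * y)⁻¹ * (x⁻¹ * w)⁻¹ * (x⁻¹ * y) * (x⁻¹ * w)) * (w * x⁻¹ * y)) := by
          rw [hc]
      _ = (w * x⁻¹ * y) *
            (z⁻¹ * ((x⁻¹ * y)⁻¹ * (x⁻¹ * w)⁻¹ * (x⁻¹ * y) * (x⁻¹ * w))) * (w * x⁻¹ * y) := by
          group
      _ = (w * x⁻¹ * y) *
            (((x⁻¹ * y)⁻¹ * (x⁻¹ * w)⁻¹ * (x⁻¹ * y) * (x⁻¹ * w)) * z⁻¹) * (w * x⁻¹ * y) := by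
          rw [hc]
      _ = y * (x * (w * z⁻¹ * w)⁻¹ * x)⁻¹ * y := by group
end

section
/- Let H be the Heisenberg group of upper triangular 3×3 integer matrices with 1's on the diagonal (equivalently, the free nilpotent group of class 2 on generators x, y). Then there exist elements a, b, c ∈ H such that no w ∈ H satisfies a ◁ (b ◁ c) = w ◁ c, where u ◁ v = u v⁻¹ u. Concretely, x y² x is not a square in H. -/
/-- The integer Heisenberg group (free nilpotent group of class 2 on two
generators), presented via normal forms `x^i y^j [y,x]^k`, with multiplication
`(i,j,k)(i',j',k') = (i+i', j+j', k+k'+j*i')`. -/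
structure Heis where
  i : ℤ
  j : ℤ
  k : ℤ

namespace Heis

instance : Mul Heis := ⟨fun a b => ⟨a.i + b.i, a.j + b.j, a.k + b.k + a.j * b.i⟩⟩
instance : One Heis := ⟨⟨0, 0, 0⟩⟩
instance : Inv Heis := ⟨fun a => ⟨-a.i, -a.j, -a.k + a.j * a.i⟩⟩

theorem mul_def (a b : Heis) :
    a * b = ⟨a.i + b.i, a.j + b.j, a.k + b.k + a.j * b.i⟩ := rfl

instance : Group Heis where
  mul_assoc a b c := by
    simp only [mul_def, mk.injEq]
    refine ⟨by ring, by ring, by ring⟩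
  one_mul a := by
    obtain ⟨i, j, k⟩ := a
    simp only [mul_def, mk.injEq]
    show (0 : ℤ) + i = i ∧ (0 : ℤ) + j = j ∧ 0 + k + 0 * i = k
    refine ⟨by ring, by ring, by ring⟩
  mul_one a := by
    obtain ⟨i, j, k⟩ := a
    simp only [mul_def, mk.injEq]
    show i + 0 = i ∧ j + 0 = j ∧ k + 0 + j * 0 = k
    refine ⟨by ring, by ring, by ring⟩
  inv_mul_cancel a := by
    obtain ⟨i, j, k⟩ := a
    show (⟨-i + i, -j + j, (-k + j * i) + k + -j * i⟩ : Heis) = ⟨0, 0, 0⟩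
    simp only [mk.injEq]
    refine ⟨by ring, by ring, by ring⟩

/-- The standard generators. -/
def x : Heis := ⟨1, 0, 0⟩
def y : Heis := ⟨0, 1, 0⟩

end Heis

theorem heisenberg_core_not_closed :
    (∃ a b c : Heis, ∀ w : Heis,
      a * (b * c⁻¹ * b)⁻¹ * a ≠ w * c⁻¹ * w) ∧
    (∀ w : Heis, w * w ≠ Heis.x * Heis.y * Heis.y * Heis.x) := by
  have key : ∀ w : Heis, w * w ≠ (⟨2, 2, 2⟩ : Heis) := by
    rintro ⟨i, j, k⟩ h
    simp only [Heis.mul_def, Heis.mk.injEq] at h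
    obtain ⟨h1, h2, h3⟩ := h
    have hi : i = 1 := by omega
    have hj : j = 1 := by omega
    subst hi hj
    omega
  constructor
  · refine ⟨Heis.x, Heis.y⁻¹, 1, fun w h => key w ?_⟩
    simp only [inv_one, mul_one] at h
    rw [← h]
    rfl
  · intro w h
    exact key w (h.trans rfl)
end

section
/- Let G be the free abelian group ℤ³ with generators x, y, z, and H the group with underlying set ℤ³ and multiplication (i,j,k)·(i′,j′,k′) = (i+i′, j+j′, k+k′+2 j i′) (the class-2 nilpotent group with a central square root of the commutator). Then the map (i,j,k) ↦ (i, j, k − i j) is an isomorphism of core quandles from Core(H) to Core(G): it is a bijection satisfying φ(a ◁_H b) = φ(a) ◁_G φ(b) for all a, b, where u ◁ v = u v⁻¹ u in each group. -/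
/-- The class-2 nilpotent group obtained from the integer Heisenberg group by
adjoining a central square root of the commutator: underlying set `ℤ³` with
multiplication `(i,j,k)(i',j',k') = (i+i', j+j', k+k'+2ji')`. -/
structure HeisSqrt where
  i : ℤ
  j : ℤ
  k : ℤ

namespace HeisSqrt

instance : Mul HeisSqrt :=
  ⟨fun a b => ⟨a.i + b.i, a.j + b.j, a.k + b.k + 2 * a.j * b.i⟩⟩
instance : One HeisSqrt := ⟨⟨0, 0, 0⟩⟩
instance : Inv HeisSqrt := ⟨fun a => ⟨-a.i, -a.j, -a.k + 2 * a.j * a.i⟩⟩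

theorem mul_def (a b : HeisSqrt) :
    a * b = ⟨a.i + b.i, a.j + b.j, a.k + b.k + 2 * a.j * b.i⟩ := rfl

instance : Group HeisSqrt where
  mul_assoc a b c := by
    simp only [mul_def, mk.injEq]
    refine ⟨by ring, by ring, by ring⟩
  one_mul a := by
    obtain ⟨i, j, k⟩ := a
    show (⟨0 + i, 0 + j, 0 + k + 2 * 0 * i⟩ : HeisSqrt) = ⟨i, j, k⟩
    simp only [mk.injEq]
    refine ⟨by ring, by ring, by ring⟩
  mul_one a := by
    obtain ⟨i, j, k⟩ := a
    show (⟨i + 0, j + 0, k + 0 + 2 * j * 0⟩ : HeisSqrt) = ⟨i, j, k⟩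
    simp only [mk.injEq]
    refine ⟨by ring, by ring, by ring⟩
  inv_mul_cancel a := by
    obtain ⟨i, j, k⟩ := a
    show (⟨-i + i, -j + j, (-k + 2 * j * i) + k + 2 * -j * i⟩ : HeisSqrt)
      = ⟨0, 0, 0⟩
    simp only [mk.injEq]
    refine ⟨by ring, by ring, by ring⟩

end HeisSqrt

/-- The map `(i,j,k) ↦ (i, j, k - ij)` into the free abelian group `ℤ³`
(written multiplicatively). -/
def coreIso : HeisSqrt → Multiplicative (ℤ × ℤ × ℤ) :=
  fun a => Multiplicative.ofAdd (a.i, a.j, a.k - a.i * a.j)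

theorem heisSqrt_core_iso_abelian :
    Function.Bijective coreIso ∧
    ∀ a b : HeisSqrt,
      coreIso (a * b⁻¹ * a) = coreIso a * (coreIso b)⁻¹ * coreIso a := by
  constructor
  · constructor
    · rintro ⟨i, j, k⟩ ⟨i', j', k'⟩ h
      have h' : ((i, j, k - i * j) : ℤ × ℤ × ℤ) = (i', j', k' - i' * j') := h
      rw [Prod.ext_iff, Prod.ext_iff] at h'
      obtain ⟨h1, h2, h3⟩ := h'
      dsimp at h1 h2 h3
      subst h1; subst h2
      simp only [HeisSqrt.mk.injEq, true_and]
      linarith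
    · rintro g
      refine ⟨⟨g.toAdd.1, g.toAdd.2.1, g.toAdd.2.2 + g.toAdd.1 * g.toAdd.2.1⟩, ?_⟩
      apply Multiplicative.toAdd.injective
      simp [coreIso]
  · rintro ⟨i, j, k⟩ ⟨i', j', k'⟩
    have hinv : (⟨i', j', k'⟩ : HeisSqrt)⁻¹ = ⟨-i', -j', -k' + 2 * j' * i'⟩ := rfl
    apply Multiplicative.toAdd.injective
    rw [toAdd_mul, toAdd_mul, toAdd_inv]
    simp only [coreIso, hinv, HeisSqrt.mul_def, toAdd_ofAdd]
    refine Prod.ext (by dsimp; try ring) (Prod.ext (by dsimp; try ring) (by dsimp; try ring))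
end
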